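/- Let g : ℝ → ℝ be continuous on [0,1] and concave on [0,1] with g(0) ≥ 0 and g(1) ≥ 0. Then for every q* ∈ [0,1], the integral ∫_0^1 g(t) dt is at least g(q*)/2. (Twice the area under a concave revenue curve is at least its maximum value; this is the geometric core of the single-bidder Bulow–Klemperer argument.) -/

import Mathlib

/-- For `g` continuous and concave on `[0,1]` with `g 0 ≥ 0` and `g 1 ≥ 0`,
the area under `g` over `[0,1]` is at least half of `g q*` for every `q* ∈ [0,1]`. -/
theorem stmt_9 (g : ℝ → ℝ)
    (hcont : ContinuousOn g (Set.Icc (0:ℝ) 1))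
    (hconc : ConcaveOn ℝ (Set.Icc (0:ℝ) 1) g)
    (h0 : 0 ≤ g 0) (h1 : 0 ≤ g 1)
    (qstar : ℝ) (hq : qstar ∈ Set.Icc (0:ℝ) 1) :
    g qstar / 2 ≤ ∫ t in (0:ℝ)..1, g t := by
  obtain ⟨hq0, hq1⟩ := hq
  have hint : IntervalIntegrable g MeasureTheory.volume 0 1 := by
    apply ContinuousOn.intervalIntegrable
    rwa [Set.uIcc_of_le (by norm_num : (0:ℝ) ≤ 1)]
  have hint1 : IntervalIntegrable g MeasureTheory.volume 0 qstar := by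
    apply ContinuousOn.intervalIntegrable
    apply hcont.mono
    rw [Set.uIcc_of_le hq0]
    exact Set.Icc_subset_Icc le_rfl hq1
  have hint2 : IntervalIntegrable g MeasureTheory.volume qstar 1 := by
    apply ContinuousOn.intervalIntegrable
    apply hcont.mono
    rw [Set.uIcc_of_le hq1]
    exact Set.Icc_subset_Icc hq0 le_rfl
  have hqmem : qstar ∈ Set.Icc (0:ℝ) 1 := ⟨hq0, hq1⟩
  have hsplit : (∫ t in (0:ℝ)..1, g t)
      = (∫ t in (0:ℝ)..qstar, g t) + ∫ t in qstar..(1:ℝ), g t :=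
    (intervalIntegral.integral_add_adjacent_intervals hint1 hint2).symm
  have hA : qstar * g qstar / 2 ≤ ∫ t in (0:ℝ)..qstar, g t := by
    rcases eq_or_lt_of_le hq0 with h | h
    · simp [← h]
    · have hle : ∀ t ∈ Set.Icc (0:ℝ) qstar, t * (g qstar / qstar) ≤ g t := by
        intro t ht
        obtain ⟨ht0, htq⟩ := ht
        have hb0 : 0 ≤ t / qstar := div_nonneg ht0 h.le
        have hb1 : t / qstar ≤ 1 := (div_le_one h).mpr htq
        have key := hconc.2 (Set.mem_Icc.mpr ⟨le_rfl, by linarith⟩) hqmem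
          (by linarith : (0:ℝ) ≤ 1 - t / qstar) hb0 (by ring)
        simp only [smul_eq_mul] at key
        have ht' : (1 - t / qstar) * 0 + (t / qstar) * qstar = t := by
          field_simp
          ring
        rw [ht'] at key
        have heq : t * (g qstar / qstar) = t / qstar * g qstar := by
          field_simp
        rw [heq]
        nlinarith [mul_nonneg (by linarith : (0:ℝ) ≤ 1 - t / qstar) h0]
      have hlin : IntervalIntegrable (fun t => t * (g qstar / qstar))
          MeasureTheory.volume 0 qstar := by
        apply Continuous.intervalIntegrable
        continuity
      have hmono := intervalIntegral.integral_mono_on h.le hlin hint1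
        (by intro t ht; exact hle t ht)
      have hcomp : (∫ t in (0:ℝ)..qstar, t * (g qstar / qstar))
          = qstar * g qstar / 2 := by
        rw [intervalIntegral.integral_mul_const, integral_id]
        field_simp
        ring
      linarith [hmono, hcomp ▸ hmono]
  have hB : (1 - qstar) * g qstar / 2 ≤ ∫ t in qstar..(1:ℝ), g t := by
    rcases eq_or_lt_of_le hq1 with h | h
    · simp [h]
    · have hle : ∀ t ∈ Set.Icc qstar (1:ℝ), (1 - t) * (g qstar / (1 - qstar)) ≤ g t := by
        intro t ht
        obtain ⟨htq, ht1⟩ := ht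
        have hd : (0:ℝ) < 1 - qstar := by linarith
        have hb0 : 0 ≤ (1 - t) / (1 - qstar) := div_nonneg (by linarith) hd.le
        have ha0 : 0 ≤ (t - qstar) / (1 - qstar) := div_nonneg (by linarith) hd.le
        have key := hconc.2 hqmem (Set.mem_Icc.mpr ⟨by linarith, le_rfl⟩)
          hb0 ha0 (by field_simp; ring)
        simp only [smul_eq_mul] at key
        have ht' : (1 - t) / (1 - qstar) * qstar + (t - qstar) / (1 - qstar) * 1 = t := by
          field_simp
          ring
        rw [ht'] at key
        have : (1 - t) * (g qstar / (1 - qstar)) = (1 - t) / (1 - qstar) * g qstar := by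
          ring
        rw [this]
        nlinarith [mul_nonneg ha0 h1]
      have hlin : IntervalIntegrable (fun t => (1 - t) * (g qstar / (1 - qstar)))
          MeasureTheory.volume qstar 1 := by
        apply Continuous.intervalIntegrable
        continuity
      have hmono := intervalIntegral.integral_mono_on h.le hlin hint2
        (by intro t ht; exact hle t ht)
      have hcomp : (∫ t in qstar..(1:ℝ), (1 - t) * (g qstar / (1 - qstar)))
          = (1 - qstar) * g qstar / 2 := by
        have : (∫ t in qstar..(1:ℝ), (1 - t) * (g qstar / (1 - qstar)))
            = (∫ t in qstar..(1:ℝ), (1 - t)) * (g qstar / (1 - qstar)) :=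
          intervalIntegral.integral_mul_const _ _
        rw [this]
        have hd : (1:ℝ) - qstar ≠ 0 := by linarith
        have h1t : (∫ t in qstar..(1:ℝ), (1 - t)) = (1 - qstar) ^ 2 / 2 := by
          have hcs := intervalIntegral.integral_comp_sub_left (a := qstar) (b := 1)
            (fun x : ℝ => x) 1
          simp only [integral_id] at hcs
          rw [hcs]
          ring
        rw [h1t]
        field_simp
      linarith [hcomp ▸ hmono]
  rw [hsplit]
  nlinarith [hA, hB]
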